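/- Let K be an algebraically closed field, I an ideal of K[x_1,...,x_n], and U a polynomial. Then every point of the zero set of the saturation I : U^∞ is a zero of the ideal of polynomials vanishing on Zero(I) \ Zero(U); equivalently, Zero(I : U^∞) ⊆ closure of Zero(I) \ Zero(U) in the Zariski topology. -/

import Mathlib

open MvPolynomial

/-- The common zero set of a set of polynomials. -/
def zeroSet {K : Type*} [CommSemiring K] {n : ℕ} (S : Set (MvPolynomial (Fin n) K)) :
    Set (Fin n → K) :=
  {x | ∀ f ∈ S, MvPolynomial.eval x f = 0}

/-- The Zariski closure of a set `S ⊆ K^n`. -/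
def zariskiClosure {K : Type*} [CommSemiring K] {n : ℕ} (S : Set (Fin n → K)) :
    Set (Fin n → K) :=
  zeroSet {f : MvPolynomial (Fin n) K | ∀ x ∈ S, MvPolynomial.eval x f = 0}

/-- Over an algebraically closed field, `Zero(I : U^∞)` is contained in the Zariski
closure of `Zero(I) \ Zero(U)`. -/
theorem zeroSet_saturation_subset_closure {K : Type*} [Field K] [IsAlgClosed K] {n : ℕ}
    (I : Ideal (MvPolynomial (Fin n) K)) (U : MvPolynomial (Fin n) K) :
    zeroSet {g : MvPolynomial (Fin n) K | ∃ m > 0, U ^ m * g ∈ I} ⊆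
      zariskiClosure {x : Fin n → K |
        (∀ g ∈ I, MvPolynomial.eval x g = 0) ∧ MvPolynomial.eval x U ≠ 0} := by
  intro x hx f hf
  -- U * f vanishes on zeroLocus I
  have hUf : U * f ∈ (MvPolynomial.vanishingIdeal K (MvPolynomial.zeroLocus K I)) := by
    rw [MvPolynomial.mem_vanishingIdeal_iff]
    intro y hy
    rw [map_mul]
    show MvPolynomial.eval y U * MvPolynomial.eval y f = 0
    by_cases hU : MvPolynomial.eval y U = 0
    · rw [hU, zero_mul]
    · rw [hf y ⟨fun g hg => (MvPolynomial.mem_zeroLocus_iff.mp hy) g hg, hU⟩, mul_zero]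
  rw [MvPolynomial.vanishingIdeal_zeroLocus_eq_radical (K := K)] at hUf
  obtain ⟨k, hk⟩ := hUf
  have hmem : U ^ (k + 1) * f ^ (k + 1) ∈ I := by
    have : U ^ (k + 1) * f ^ (k + 1) = (U * f) * (U * f) ^ k := by ring
    rw [this]
    exact I.mul_mem_left _ hk
  have := hx (f ^ (k + 1)) ⟨k + 1, Nat.succ_pos k, hmem⟩
  rw [map_pow] at this
  exact pow_eq_zero_iff (Nat.succ_ne_zero k) |>.mp this
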